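/- Inf-sup condition for the W-cap formulation: with W and Q as in the W-cap setting, for every q ∈ Q = H⁻¹(Γ), sup_{w∈W, w≠0} ⟨q, εTu − v⟩ / ‖w‖_W ≥ ‖q‖_{-1}; i.e., the inf-sup constant is at least 1, independently of ε. -/

import Mathlib

/-- inf-sup condition for the W-cap formulation. With
`W = U × V` normed by `‖(u,v)‖_W² = |u|² + ε²|Tu|² + |v|²` and `Q = V*`
with the dual norm, for every `q ∈ Q` we have
`sup_{0 ≠ (u,v) ∈ W} ⟨q, εTu − v⟩ / ‖(u,v)‖_W ≥ ‖q‖`, i.e. the inf-sup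
constant is at least `1`, independently of `ε`. -/
theorem wcap_inf_sup
    (U V : Type*)
    [NormedAddCommGroup U] [InnerProductSpace ℝ U] [CompleteSpace U]
    [NormedAddCommGroup V] [InnerProductSpace ℝ V] [CompleteSpace V]
    (T : U →L[ℝ] V) (ε : ℝ) (hε : 0 < ε) :
    ∀ q : StrongDual ℝ V,
      ‖q‖ ≤ sSup {r : ℝ | ∃ (u : U) (v : V), (u, v) ≠ 0 ∧
        r = q (ε • T u - v) /
          Real.sqrt (‖u‖ ^ 2 + ε ^ 2 * ‖T u‖ ^ 2 + ‖v‖ ^ 2)} := by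
  intro q
  set S : Set ℝ := {r : ℝ | ∃ (u : U) (v : V), (u, v) ≠ 0 ∧
        r = q (ε • T u - v) /
          Real.sqrt (‖u‖ ^ 2 + ε ^ 2 * ‖T u‖ ^ 2 + ‖v‖ ^ 2)} with hSdef
  -- boundedness of S
  have hbdd : BddAbove S := by
    refine ⟨2 * ‖q‖, fun r hr => ?_⟩
    obtain ⟨u, v, hne, hr⟩ := hr
    set D := Real.sqrt (‖u‖ ^ 2 + ε ^ 2 * ‖T u‖ ^ 2 + ‖v‖ ^ 2) with hD
    have hsum : 0 < ‖u‖ ^ 2 + ε ^ 2 * ‖T u‖ ^ 2 + ‖v‖ ^ 2 := by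
      rcases Prod.mk_eq_zero.not.mp hne |> not_and_or.mp with h | h
      · have : 0 < ‖u‖ := norm_pos_iff.mpr h
        positivity
      · have : 0 < ‖v‖ := norm_pos_iff.mpr h
        positivity
    have hDpos : 0 < D := Real.sqrt_pos.mpr hsum
    have h1 : ε * ‖T u‖ ≤ D := by
      rw [show ε * ‖T u‖ = Real.sqrt ((ε * ‖T u‖) ^ 2) from
        (Real.sqrt_sq (by positivity)).symm]
      apply Real.sqrt_le_sqrt
      nlinarith [sq_nonneg ‖u‖, sq_nonneg ‖v‖]
    have h2 : ‖v‖ ≤ D := by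
      rw [show ‖v‖ = Real.sqrt (‖v‖ ^ 2) from (Real.sqrt_sq (norm_nonneg v)).symm]
      apply Real.sqrt_le_sqrt
      nlinarith [sq_nonneg ‖u‖, sq_nonneg (ε * ‖T u‖)]
    rw [hr, div_le_iff₀ hDpos]
    have hnum : q (ε • T u - v) ≤ ‖q‖ * (ε * ‖T u‖ + ‖v‖) := by
      calc q (ε • T u - v) ≤ ‖q (ε • T u - v)‖ := le_abs_self _
        _ ≤ ‖q‖ * ‖ε • T u - v‖ := q.le_opNorm _
        _ ≤ ‖q‖ * (ε * ‖T u‖ + ‖v‖) := by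
            apply mul_le_mul_of_nonneg_left _ (norm_nonneg q)
            calc ‖ε • T u - v‖ ≤ ‖ε • T u‖ + ‖v‖ := norm_sub_le _ _
              _ = ε * ‖T u‖ + ‖v‖ := by rw [norm_smul, Real.norm_eq_abs, abs_of_pos hε]
    calc q (ε • T u - v) ≤ ‖q‖ * (ε * ‖T u‖ + ‖v‖) := hnum
      _ ≤ ‖q‖ * (D + D) := by
          apply mul_le_mul_of_nonneg_left (by linarith) (norm_nonneg q)
      _ = 2 * ‖q‖ * D := by ring
  -- key membership : for v ≠ 0, q v / ‖v‖ ∈ S (via u = 0, -v)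
  have hmem : ∀ v : V, v ≠ 0 → q v / ‖v‖ ∈ S := by
    intro v hv
    refine ⟨0, -v, by simp [Prod.ext_iff, hv], ?_⟩
    simp [Real.sqrt_sq (norm_nonneg v)]
  rcases subsingleton_or_nontrivial V with hV | hV
  · -- q = 0
    have hq : q = 0 := by ext v; rw [Subsingleton.elim v 0]; simp
    rw [hq, norm_zero]
    rcases subsingleton_or_nontrivial U with hU | hU
    · have : S = ∅ := by
        ext r
        simp only [hSdef, Set.mem_setOf_eq, Set.mem_empty_iff_false, iff_false]
        rintro ⟨u, v, hne, -⟩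
        exact hne (Prod.ext (Subsingleton.elim u 0) (Subsingleton.elim v 0))
      rw [this, Real.sSup_empty]
    · obtain ⟨u, hu⟩ := exists_ne (0 : U)
      have h0 : (0 : ℝ) ∈ S := by
        refine ⟨u, 0, by simp [Prod.ext_iff, hu], ?_⟩
        rw [hq]; simp
      exact le_csSup hbdd h0
  · -- main case
    rw [le_csSup_iff hbdd ?hne]
    case hne =>
      obtain ⟨v, hv⟩ := exists_ne (0 : V)
      exact ⟨_, hmem v hv⟩
    intro b hb
    obtain ⟨v₀, hv₀⟩ := exists_ne (0 : V)
    have hb0 : 0 ≤ b := by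
      have h1 := hb (hmem v₀ hv₀)
      have h2 := hb (hmem (-v₀) (neg_ne_zero.mpr hv₀))
      simp only [map_neg, norm_neg] at h2
      have : -(q v₀ / ‖v₀‖) = -q v₀ / ‖v₀‖ := by ring
      linarith [this ▸ h2]
    apply q.opNorm_le_bound hb0
    intro v
    rcases eq_or_ne v 0 with rfl | hv
    · simp
    · have hvpos : 0 < ‖v‖ := norm_pos_iff.mpr hv
      have h1 := hb (hmem v hv)
      have h2 := hb (hmem (-v) (neg_ne_zero.mpr hv))
      simp only [map_neg, norm_neg] at h2
      have h1' : q v ≤ b * ‖v‖ := (div_le_iff₀ hvpos).mp h1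
      have h2' : -q v ≤ b * ‖v‖ := (div_le_iff₀ hvpos).mp h2
      rw [Real.norm_eq_abs, abs_le]
      exact ⟨by linarith, h1'⟩
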